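/- arXiv:1811.11502 — 2 statements merged into one kernel-verified Lean document; each statement's English description precedes it below -/
import Mathlib

section
/- (Energy dissipation for the sweeping dimensional splitting scheme S1.) Let N ≥ 2, Δx, Δy, Δt > 0, H : ℝ → ℝ convex and differentiable, V ∈ ℝ^{N×N}, and w : ℤ² → ℝ with w(p,q) = w(−p,q) = w(p,−q). Consider the sweeping S1 scheme: an x-sweep ρ^{n,(0)} = ρⁿ, ρ^{n,(1)}, …, ρ^{n,(N)} = ρ^{n+1/2} in which at stage r only row j = r is updated via ρ^{n,(r)}_{i,r} = ρ^{n,(r−1)}_{i,r} − (Δt/Δx)(F^{(r)}_{i+1/2,r} − F^{(r)}_{i−1/2,r}), with F^{(r)}_{i+1/2,r} = ρ^{E,(r)}_{i,r}(u^{(r)}_{i+1/2,r})⁺ + ρ^{W,(r)}_{i+1,r}(u^{(r)}_{i+1/2,r})⁻ (zero boundary fluxes), ρ^{E,(r)}, ρ^{W,(r)} the second-order minmod reconstructions (θ = 2, mesh Δx) of row r of ρ^{n,(r)}, u^{(r)}_{i+1/2,r} = −(ξ^{(r)}_{i+1,r} − ξ^{(r)}_{i,r})/Δx, ξ^{(r)}_{i,j}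 = H'(ρ^{n,(r)}_{i,j}) + V_{ij} + ΔxΔy·∑_{k,l} w(i−k,j−l)·ρ̂^{(r)}_{k,l}, where ρ̂^{(r)}_{k,l} = ρ^{**,(r)}_{k,l} if l = r and ρ̂^{(r)}_{k,l} = ρ^{n,(r−1)}_{k,l} otherwise; followed by an analogous column-by-column y-sweep ρ^{n+1/2,(0)} = ρ^{n+1/2}, …, ρ^{n+1/2,(N)} = ρⁿ⁺¹ with convolution variable equal to ρ^{***,(r)} on column k = r and ρ^{n+1/2,(r−1)} elsewhere. Assume all iterates at all stages have nonnegative entries (guaranteed under the CFL condition 2Δt·max((u^{(r)})⁺, −(u^{(r)})⁻) ≤ Δx and 2Δt·max((v^{(r)})⁺, −(v^{(r)})⁻) ≤ Δy when ρⁿ ≥ 0). If for every r one of the following holds: (i) ρ^{**,(r)} = (ρ^{n,(r)} + ρ^{n,(r−1)})/2 and ρ^{***,(r)} = (ρ^{n+1/2,(r)} + ρ^{n+1/2,(r−1)})/2 (any kernel); (ii) ρ^{**,(r)} = ρ^{n,(r−1)} and ρ^{***,(r)} = ρ^{n+1/2,(r−1)} and the kernel w is negative definite; (iii) ρ^{**,(r)}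 = ρ^{n,(r)} and ρ^{***,(r)} = ρ^{n+1/2,(r)} and the kernel w is positive definite; then E_Δ(ρⁿ⁺¹) ≤ E_Δ(ρⁿ); indeed the discrete energy decreases at every individual stage of both sweeps. -/
/-- The minmod limiter: `min` if all arguments are positive, `max` if all are negative,
and `0` otherwise. -/
noncomputable def minmod3 (a b c : ℝ) : ℝ :=
  if 0 < a ∧ 0 < b ∧ 0 < c then min a (min b c)
  else if a < 0 ∧ b < 0 ∧ c < 0 then max a (max b c)
  else 0

/-- The minmod mslope (θ = 2, mesh `dx`) of a vector `ρ` indexed by `1,…,N`: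
interior cells `2 ≤ i ≤ N−1` use the minmod limiter; the first and last cells get `0`. -/
noncomputable def mslope (N : ℕ) (dx : ℝ) (ρ : ℕ → ℝ) (i : ℕ) : ℝ :=
  if 2 ≤ i ∧ i ≤ N - 1 then
    minmod3 (2 * (ρ (i + 1) - ρ i) / dx)
      ((ρ (i + 1) - ρ (i - 1)) / (2 * dx))
      (2 * (ρ i - ρ (i - 1)) / dx)
  else 0

/-- East reconstruction: `ρᴱ_i = ρ_i + (dx/2)·σ_i`. -/
noncomputable def recE (N : ℕ) (dx : ℝ) (ρ : ℕ → ℝ) (i : ℕ) : ℝ :=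
  ρ i + dx / 2 * mslope N dx ρ i

/-- West reconstruction: `ρᵂ_i = ρ_i − (dx/2)·σ_i`. -/
noncomputable def recW (N : ℕ) (dx : ℝ) (ρ : ℕ → ℝ) (i : ℕ) : ℝ :=
  ρ i - dx / 2 * mslope N dx ρ i

/-- Positive part `z⁺ = max(z,0)`. -/
noncomputable def pospart (z : ℝ) : ℝ := max z 0

/-- Negative part `z⁻ = min(z,0)`. -/
noncomputable def negpart (z : ℝ) : ℝ := min z 0

/-- The two-dimensional discrete free energy
`E_Δ(ρ) = ΔxΔy·(∑ H(ρ_{ij}) + ∑ V_{ij}ρ_{ij} + (ΔxΔy/2)·∑ w(i−k,j−l)ρ_{ij}ρ_{kl})`. -/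
noncomputable def Edisc2 (N : ℕ) (dx dy : ℝ) (H : ℝ → ℝ) (V : ℕ → ℕ → ℝ)
    (w : ℤ → ℤ → ℝ) (ρ : ℕ → ℕ → ℝ) : ℝ :=
  dx * dy * ((∑ i ∈ Finset.Icc 1 N, ∑ j ∈ Finset.Icc 1 N, H (ρ i j))
    + (∑ i ∈ Finset.Icc 1 N, ∑ j ∈ Finset.Icc 1 N, V i j * ρ i j)
    + dx * dy / 2 * ∑ i ∈ Finset.Icc 1 N, ∑ j ∈ Finset.Icc 1 N,
        ∑ k ∈ Finset.Icc 1 N, ∑ l ∈ Finset.Icc 1 N,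
          w ((i : ℤ) - (k : ℤ)) ((j : ℤ) - (l : ℤ)) * ρ i j * ρ k l)

/-- The kernel `w` is negative definite: `∑ w(i−k,j−l)(a_{ij}−b_{ij})(a_{kl}−b_{kl}) ≤ 0`
for all matrices `a, b` with nonnegative entries. -/
def NegDefKer2 (N : ℕ) (w : ℤ → ℤ → ℝ) : Prop :=
  ∀ a b : ℕ → ℕ → ℝ,
    (∀ i j, 1 ≤ i → i ≤ N → 1 ≤ j → j ≤ N → 0 ≤ a i j) →
    (∀ i j, 1 ≤ i → i ≤ N → 1 ≤ j → j ≤ N → 0 ≤ b i j) →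
    ∑ i ∈ Finset.Icc 1 N, ∑ j ∈ Finset.Icc 1 N,
      ∑ k ∈ Finset.Icc 1 N, ∑ l ∈ Finset.Icc 1 N,
        w ((i : ℤ) - (k : ℤ)) ((j : ℤ) - (l : ℤ))
          * (a i j - b i j) * (a k l - b k l) ≤ 0

/-- The kernel `w` is positive definite: `∑ w(i−k,j−l)(a_{ij}−b_{ij})(a_{kl}−b_{kl}) ≥ 0`
for all matrices `a, b` with nonnegative entries. -/
def PosDefKer2 (N : ℕ) (w : ℤ → ℤ → ℝ) : Prop :=
  ∀ a b : ℕ → ℕ → ℝ,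
    (∀ i j, 1 ≤ i → i ≤ N → 1 ≤ j → j ≤ N → 0 ≤ a i j) →
    (∀ i j, 1 ≤ i → i ≤ N → 1 ≤ j → j ≤ N → 0 ≤ b i j) →
    0 ≤ ∑ i ∈ Finset.Icc 1 N, ∑ j ∈ Finset.Icc 1 N,
      ∑ k ∈ Finset.Icc 1 N, ∑ l ∈ Finset.Icc 1 N,
        w ((i : ℤ) - (k : ℤ)) ((j : ℤ) - (l : ℤ))
          * (a i j - b i j) * (a k l - b k l)
section Helpers

open Finset

lemma tangent_le {H : ℝ → ℝ} (hc : ConvexOn ℝ Set.univ H) (hd : Differentiable ℝ H)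
    (x y : ℝ) : H y - H x ≤ deriv H y * (y - x) := by
  rcases lt_trichotomy x y with h | h | h
  · have hs := hc.slope_le_deriv (Set.mem_univ x) (Set.mem_univ y) h (hd y)
    rw [slope_def_field] at hs
    have hxy : (0:ℝ) < y - x := by linarith
    have := (div_le_iff₀ hxy).mp hs
    linarith
  · subst h; simp
  · have hs := hc.deriv_le_slope (Set.mem_univ y) (Set.mem_univ x) h (hd y)
    rw [slope_def_field] at hs
    have hxy : (0:ℝ) < x - y := by linarith
    have h2 := (le_div_iff₀ hxy).mp hs
    have e : deriv H y * (y - x) = -(deriv H y * (x - y)) := by ring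
    linarith

lemma pospart_mul_nonneg (z : ℝ) : 0 ≤ pospart z * z := by
  unfold pospart
  rcases le_or_gt 0 z with h | h
  · rw [max_eq_left h]; exact mul_self_nonneg z
  · rw [max_eq_right h.le]; simp

lemma negpart_mul_nonneg (z : ℝ) : 0 ≤ negpart z * z := by
  unfold negpart
  rcases le_or_gt 0 z with h | h
  · rw [min_eq_right h]; simp
  · rw [min_eq_left h.le]; exact mul_self_nonneg z

lemma rec_nonneg (N : ℕ) (dx : ℝ) (hdx : 0 < dx) (ρ : ℕ → ℝ)
    (hρ : ∀ k, 1 ≤ k → k ≤ N → 0 ≤ ρ k) (i : ℕ) (h1 : 1 ≤ i) (h2 : i ≤ N) :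
    0 ≤ recE N dx ρ i ∧ 0 ≤ recW N dx ρ i := by
  unfold recE recW mslope
  by_cases hint : 2 ≤ i ∧ i ≤ N - 1
  · simp only [if_pos hint]
    obtain ⟨hi2, hiN⟩ := hint
    have hi0 : 0 ≤ ρ i := hρ i h1 h2
    have him : 0 ≤ ρ (i - 1) := hρ _ (by omega) (by omega)
    have hip : 0 ≤ ρ (i + 1) := hρ _ (by omega) (by omega)
    unfold minmod3
    by_cases hpos : 0 < 2 * (ρ (i + 1) - ρ i) / dx ∧
        0 < (ρ (i + 1) - ρ (i - 1)) / (2 * dx) ∧ 0 < 2 * (ρ i - ρ (i - 1)) / dx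
    · rw [if_pos hpos]
      set A := 2 * (ρ (i + 1) - ρ i) / dx with hA
      set B := (ρ (i + 1) - ρ (i - 1)) / (2 * dx) with hB
      set C := 2 * (ρ i - ρ (i - 1)) / dx with hC
      have hσ0 : 0 < min A (min B C) := lt_min hpos.1 (lt_min hpos.2.1 hpos.2.2)
      have hσC : min A (min B C) ≤ C := le_trans (min_le_right _ _) (min_le_right _ _)
      have hCval : dx / 2 * C = ρ i - ρ (i - 1) := by
        rw [hC]; field_simp
      have hmono : dx / 2 * min A (min B C) ≤ dx / 2 * C :=
        mul_le_mul_of_nonneg_left hσC (by linarith)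
      constructor
      · nlinarith
      · linarith
    · rw [if_neg hpos]
      by_cases hneg : 2 * (ρ (i + 1) - ρ i) / dx < 0 ∧
          (ρ (i + 1) - ρ (i - 1)) / (2 * dx) < 0 ∧ 2 * (ρ i - ρ (i - 1)) / dx < 0
      · rw [if_pos hneg]
        set A := 2 * (ρ (i + 1) - ρ i) / dx with hA
        set B := (ρ (i + 1) - ρ (i - 1)) / (2 * dx) with hB
        set C := 2 * (ρ i - ρ (i - 1)) / dx with hC
        have hσ0 : max A (max B C) < 0 := max_lt hneg.1 (max_lt hneg.2.1 hneg.2.2)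
        have hσA : A ≤ max A (max B C) := le_max_left _ _
        have hAval : dx / 2 * A = ρ (i + 1) - ρ i := by
          rw [hA]; field_simp
        have hmono : dx / 2 * A ≤ dx / 2 * max A (max B C) :=
          mul_le_mul_of_nonneg_left hσA (by linarith)
        constructor
        · linarith
        · nlinarith
      · rw [if_neg hneg]
        constructor <;> simp [hi0]
  · simp only [if_neg hint]
    constructor <;> simp [hρ i h1 h2]

lemma sbp (ξ F : ℕ → ℝ) (m : ℕ) :
    ∑ i ∈ Finset.Icc 1 (m + 1), ξ i * (F i - F (i - 1))
      = ξ (m + 1) * F (m + 1) - ξ 1 * F 0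
        + ∑ i ∈ Finset.Icc 1 m, (ξ i - ξ (i + 1)) * F i := by
  induction m with
  | zero => simp; ring
  | succ n ih =>
      rw [Finset.sum_Icc_succ_top (by omega : 1 ≤ n + 1 + 1), ih,
          Finset.sum_Icc_succ_top (by omega : 1 ≤ n + 1)]
      have h : n + 1 + 1 - 1 = n + 1 := by omega
      rw [h]; ring

lemma sum4_comm (s : Finset ℕ) (f : ℕ → ℕ → ℕ → ℕ → ℝ) :
    ∑ i ∈ s, ∑ j ∈ s, ∑ k ∈ s, ∑ l ∈ s, f i j k l
      = ∑ k ∈ s, ∑ l ∈ s, ∑ i ∈ s, ∑ j ∈ s, f i j k l := by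
  rw [show (∑ i ∈ s, ∑ j ∈ s, ∑ k ∈ s, ∑ l ∈ s, f i j k l)
      = ∑ i ∈ s, ∑ k ∈ s, ∑ j ∈ s, ∑ l ∈ s, f i j k l from
    Finset.sum_congr rfl fun i _ => Finset.sum_comm]
  rw [Finset.sum_comm]
  refine Finset.sum_congr rfl fun k _ => ?_
  rw [show (∑ i ∈ s, ∑ j ∈ s, ∑ l ∈ s, f i j k l)
      = ∑ i ∈ s, ∑ l ∈ s, ∑ j ∈ s, f i j k l from
    Finset.sum_congr rfl fun i _ => Finset.sum_comm]
  exact Finset.sum_comm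

lemma sum4_swap (s : Finset ℕ) (f : ℕ → ℕ → ℕ → ℕ → ℝ) :
    ∑ i ∈ s, ∑ j ∈ s, ∑ k ∈ s, ∑ l ∈ s, f i j k l
      = ∑ j ∈ s, ∑ i ∈ s, ∑ l ∈ s, ∑ k ∈ s, f i j k l := by
  rw [Finset.sum_comm]
  exact Finset.sum_congr rfl fun j _ => Finset.sum_congr rfl fun i _ => Finset.sum_comm

end Helpers
noncomputable def Sker (N : ℕ) (w : ℤ → ℤ → ℝ) (f g : ℕ → ℕ → ℝ) : ℝ :=
  ∑ i ∈ Finset.Icc 1 N, ∑ j ∈ Finset.Icc 1 N, ∑ k ∈ Finset.Icc 1 N, ∑ l ∈ Finset.Icc 1 N,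
    w ((i : ℤ) - (k : ℤ)) ((j : ℤ) - (l : ℤ)) * f i j * g k l

lemma Sker_congr (N : ℕ) (w : ℤ → ℤ → ℝ) {f f' g g' : ℕ → ℕ → ℝ}
    (hf : ∀ i j, 1 ≤ i → i ≤ N → 1 ≤ j → j ≤ N → f i j = f' i j)
    (hg : ∀ i j, 1 ≤ i → i ≤ N → 1 ≤ j → j ≤ N → g i j = g' i j) :
    Sker N w f g = Sker N w f' g' := by
  unfold Sker
  refine Finset.sum_congr rfl fun i hi => Finset.sum_congr rfl fun j hj =>
    Finset.sum_congr rfl fun k hk => Finset.sum_congr rfl fun l hl => ?_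
  obtain ⟨hi1, hi2⟩ := Finset.mem_Icc.mp hi
  obtain ⟨hj1, hj2⟩ := Finset.mem_Icc.mp hj
  obtain ⟨hk1, hk2⟩ := Finset.mem_Icc.mp hk
  obtain ⟨hl1, hl2⟩ := Finset.mem_Icc.mp hl
  rw [hf i j hi1 hi2 hj1 hj2, hg k l hk1 hk2 hl1 hl2]

lemma Sker_symm (N : ℕ) (w : ℤ → ℤ → ℝ) (hwsym : ∀ p q : ℤ, w (-p) (-q) = w p q)
    (f g : ℕ → ℕ → ℝ) : Sker N w f g = Sker N w g f := by
  unfold Sker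
  rw [sum4_comm]
  refine Finset.sum_congr rfl fun k _ => Finset.sum_congr rfl fun l _ =>
    Finset.sum_congr rfl fun i _ => Finset.sum_congr rfl fun j _ => ?_
  rw [← hwsym ((k : ℤ) - (i : ℤ)) ((l : ℤ) - (j : ℤ)), neg_sub, neg_sub]
  ring

lemma Sker_diff (N : ℕ) (w : ℤ → ℤ → ℝ) (a b : ℕ → ℕ → ℝ) :
    Sker N w b b - Sker N w a a
      = Sker N w (fun i j => b i j - a i j) b + Sker N w a (fun i j => b i j - a i j) := by
  simp only [Sker, ← Finset.sum_sub_distrib, ← Finset.sum_add_distrib]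
  exact Finset.sum_congr rfl fun i _ => Finset.sum_congr rfl fun j _ =>
    Finset.sum_congr rfl fun k _ => Finset.sum_congr rfl fun l _ => by ring

lemma Sker_sub_right (N : ℕ) (w : ℤ → ℤ → ℝ) (f g h : ℕ → ℕ → ℝ) :
    Sker N w f g - Sker N w f h = Sker N w f (fun i j => g i j - h i j) := by
  simp only [Sker, ← Finset.sum_sub_distrib]
  exact Finset.sum_congr rfl fun i _ => Finset.sum_congr rfl fun j _ =>
    Finset.sum_congr rfl fun k _ => Finset.sum_congr rfl fun l _ => by ring

lemma Sker_half (N : ℕ) (w : ℤ → ℤ → ℝ) (f g h : ℕ → ℕ → ℝ) :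
    Sker N w f (fun i j => (g i j + h i j) / 2) = (Sker N w f g + Sker N w f h) / 2 := by
  have h2 : Sker N w f (fun i j => (g i j + h i j) / 2) * 2 = Sker N w f g + Sker N w f h := by
    simp only [Sker, Finset.sum_mul, ← Finset.sum_add_distrib]
    exact Finset.sum_congr rfl fun i _ => Finset.sum_congr rfl fun j _ =>
      Finset.sum_congr rfl fun k _ => Finset.sum_congr rfl fun l _ => by ring
  linarith

lemma Sker_row (N : ℕ) (w : ℤ → ℤ → ℝ) (r : ℕ) (hr1 : 1 ≤ r) (hr2 : r ≤ N)
    (d : ℕ → ℝ) (g : ℕ → ℕ → ℝ) :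
    Sker N w (fun i j => if j = r then d i else 0) g
      = ∑ i ∈ Finset.Icc 1 N, d i * ∑ k ∈ Finset.Icc 1 N, ∑ l ∈ Finset.Icc 1 N,
          w ((i : ℤ) - (k : ℤ)) ((r : ℤ) - (l : ℤ)) * g k l := by
  unfold Sker
  refine Finset.sum_congr rfl fun i _ => ?_
  rw [Finset.sum_eq_single r]
  · simp only [if_pos rfl]
    rw [Finset.mul_sum]
    refine Finset.sum_congr rfl fun k _ => ?_
    rw [Finset.mul_sum]
    exact Finset.sum_congr rfl fun l _ => by simp only [if_true]; ring
  · intro j _ hjr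
    simp [hjr]
  · intro h
    exact absurd (Finset.mem_Icc.mpr ⟨hr1, hr2⟩) h

lemma NegDefKer2_transpose {N : ℕ} {w : ℤ → ℤ → ℝ} (h : NegDefKer2 N w) :
    NegDefKer2 N (fun p q => w q p) := by
  intro a b ha hb
  have key := h (fun i j => a j i) (fun i j => b j i)
    (fun i j h1 h2 h3 h4 => ha j i h3 h4 h1 h2)
    (fun i j h1 h2 h3 h4 => hb j i h3 h4 h1 h2)
  calc (∑ i ∈ Finset.Icc 1 N, ∑ j ∈ Finset.Icc 1 N, ∑ k ∈ Finset.Icc 1 N, ∑ l ∈ Finset.Icc 1 N,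
        w ((j : ℤ) - (l : ℤ)) ((i : ℤ) - (k : ℤ)) * (a i j - b i j) * (a k l - b k l))
      = ∑ i ∈ Finset.Icc 1 N, ∑ j ∈ Finset.Icc 1 N, ∑ k ∈ Finset.Icc 1 N, ∑ l ∈ Finset.Icc 1 N,
        w ((i : ℤ) - (k : ℤ)) ((j : ℤ) - (l : ℤ)) * (a j i - b j i) * (a l k - b l k) :=
      (sum4_swap (Finset.Icc 1 N)
        (fun i j k l => w ((i : ℤ) - (k : ℤ)) ((j : ℤ) - (l : ℤ))
          * (a j i - b j i) * (a l k - b l k))).symm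
  _ ≤ 0 := key

lemma PosDefKer2_transpose {N : ℕ} {w : ℤ → ℤ → ℝ} (h : PosDefKer2 N w) :
    PosDefKer2 N (fun p q => w q p) := by
  intro a b ha hb
  have key := h (fun i j => a j i) (fun i j => b j i)
    (fun i j h1 h2 h3 h4 => ha j i h3 h4 h1 h2)
    (fun i j h1 h2 h3 h4 => hb j i h3 h4 h1 h2)
  calc (0:ℝ) ≤ _ := key
  _ = ∑ i ∈ Finset.Icc 1 N, ∑ j ∈ Finset.Icc 1 N, ∑ k ∈ Finset.Icc 1 N, ∑ l ∈ Finset.Icc 1 N,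
        w ((j : ℤ) - (l : ℤ)) ((i : ℤ) - (k : ℤ)) * (a i j - b i j) * (a k l - b k l) :=
      sum4_swap (Finset.Icc 1 N)
        (fun i j k l => w ((i : ℤ) - (k : ℤ)) ((j : ℤ) - (l : ℤ))
          * (a j i - b j i) * (a l k - b l k))

lemma Edisc2_congr {N : ℕ} {dx dy : ℝ} {H : ℝ → ℝ} {V : ℕ → ℕ → ℝ} {w : ℤ → ℤ → ℝ}
    {ρ ρ' : ℕ → ℕ → ℝ}
    (h : ∀ i j, 1 ≤ i → i ≤ N → 1 ≤ j → j ≤ N → ρ i j = ρ' i j) :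
    Edisc2 N dx dy H V w ρ = Edisc2 N dx dy H V w ρ' := by
  unfold Edisc2
  have e : ∀ i j, i ∈ Finset.Icc 1 N → j ∈ Finset.Icc 1 N → ρ i j = ρ' i j := by
    intro i j hi hj
    obtain ⟨hi1, hi2⟩ := Finset.mem_Icc.mp hi
    obtain ⟨hj1, hj2⟩ := Finset.mem_Icc.mp hj
    exact h i j hi1 hi2 hj1 hj2
  congr 1
  refine congrArg₂ _ (congrArg₂ _ ?_ ?_) ?_
  · exact Finset.sum_congr rfl fun i hi => Finset.sum_congr rfl fun j hj => by
      rw [e i j hi hj]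
  · exact Finset.sum_congr rfl fun i hi => Finset.sum_congr rfl fun j hj => by
      rw [e i j hi hj]
  · refine congrArg _ ?_
    refine Finset.sum_congr rfl fun i hi => Finset.sum_congr rfl fun j hj =>
      Finset.sum_congr rfl fun k hk => Finset.sum_congr rfl fun l hl => by
      rw [e i j hi hj, e k l hk hl]

lemma Edisc2_transpose (N : ℕ) (dx dy : ℝ) (H : ℝ → ℝ) (V : ℕ → ℕ → ℝ)
    (w : ℤ → ℤ → ℝ) (ρ : ℕ → ℕ → ℝ) :
    Edisc2 N dy dx H (fun i j => V j i) (fun p q => w q p) (fun i j => ρ j i)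
      = Edisc2 N dx dy H V w ρ := by
  unfold Edisc2
  have e1 : (∑ i ∈ Finset.Icc 1 N, ∑ j ∈ Finset.Icc 1 N, H (ρ j i))
      = ∑ i ∈ Finset.Icc 1 N, ∑ j ∈ Finset.Icc 1 N, H (ρ i j) := Finset.sum_comm
  have e2 : (∑ i ∈ Finset.Icc 1 N, ∑ j ∈ Finset.Icc 1 N, V j i * ρ j i)
      = ∑ i ∈ Finset.Icc 1 N, ∑ j ∈ Finset.Icc 1 N, V i j * ρ i j := Finset.sum_comm
  have e3 : (∑ i ∈ Finset.Icc 1 N, ∑ j ∈ Finset.Icc 1 N, ∑ k ∈ Finset.Icc 1 N,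
        ∑ l ∈ Finset.Icc 1 N, w ((j : ℤ) - (l : ℤ)) ((i : ℤ) - (k : ℤ)) * ρ j i * ρ l k)
      = ∑ i ∈ Finset.Icc 1 N, ∑ j ∈ Finset.Icc 1 N, ∑ k ∈ Finset.Icc 1 N,
        ∑ l ∈ Finset.Icc 1 N, w ((i : ℤ) - (k : ℤ)) ((j : ℤ) - (l : ℤ)) * ρ i j * ρ k l :=
    sum4_swap (Finset.Icc 1 N)
      (fun i j k l => w ((j : ℤ) - (l : ℤ)) ((i : ℤ) - (k : ℤ)) * ρ j i * ρ l k)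
  rw [e1, e2, e3]
  ring
lemma stage (N : ℕ) (hN : 2 ≤ N) (dx dy dt : ℝ)
    (hdx : 0 < dx) (hdy : 0 < dy) (hdt : 0 < dt)
    (H : ℝ → ℝ) (hHconv : ConvexOn ℝ Set.univ H) (hHdiff : Differentiable ℝ H)
    (V : ℕ → ℕ → ℝ) (w : ℤ → ℤ → ℝ)
    (hwsym : ∀ p q : ℤ, w (-p) (-q) = w p q)
    (r : ℕ) (hr1 : 1 ≤ r) (hrN : r ≤ N)
    (a b ρss : ℕ → ℕ → ℝ) (ξ : ℕ → ℕ → ℝ) (u F : ℕ → ℝ)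
    (hkeep : ∀ i j, 1 ≤ i → i ≤ N → 1 ≤ j → j ≤ N → j ≠ r → b i j = a i j)
    (hξ : ∀ i, 1 ≤ i → i ≤ N →
      ξ i r = deriv H (b i r) + V i r
        + dx * dy * ∑ k ∈ Finset.Icc 1 N, ∑ l ∈ Finset.Icc 1 N,
            w ((i : ℤ) - (k : ℤ)) ((r : ℤ) - (l : ℤ))
              * (if l = r then ρss k l else a k l))
    (hu : ∀ i, 1 ≤ i → i ≤ N - 1 → u i = -(ξ (i + 1) r - ξ i r) / dx)
    (hF : ∀ i, 1 ≤ i → i ≤ N - 1 →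
      F i = recE N dx (fun i' => b i' r) i * pospart (u i)
        + recW N dx (fun i' => b i' r) (i + 1) * negpart (u i))
    (hF0 : F 0 = 0) (hFN : F N = 0)
    (hupd : ∀ i, 1 ≤ i → i ≤ N → b i r = a i r - dt / dx * (F i - F (i - 1)))
    (hposa : ∀ i j, 1 ≤ i → i ≤ N → 1 ≤ j → j ≤ N → 0 ≤ a i j)
    (hposb : ∀ i j, 1 ≤ i → i ≤ N → 1 ≤ j → j ≤ N → 0 ≤ b i j)
    (hcase :
      (∀ k l, 1 ≤ k → k ≤ N → 1 ≤ l → l ≤ N → ρss k l = (b k l + a k l) / 2) ∨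
      ((∀ k l, 1 ≤ k → k ≤ N → 1 ≤ l → l ≤ N → ρss k l = a k l) ∧ NegDefKer2 N w) ∨
      ((∀ k l, 1 ≤ k → k ≤ N → 1 ≤ l → l ≤ N → ρss k l = b k l) ∧ PosDefKer2 N w)) :
    Edisc2 N dx dy H V w b ≤ Edisc2 N dx dy H V w a := by
  classical
  have hrI : r ∈ Finset.Icc 1 N := Finset.mem_Icc.mpr ⟨hr1, hrN⟩
  -- notation
  set I := Finset.Icc 1 N with hIdef
  set d : ℕ → ℝ := fun i => b i r - a i r with hddef
  set dtil : ℕ → ℕ → ℝ := fun i j => if j = r then d i else 0 with hdtildef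
  set d2 : ℕ → ℕ → ℝ := fun i j => b i j - a i j with hd2def
  set ρhat : ℕ → ℕ → ℝ := fun k l => if l = r then ρss k l else a k l with hρhatdef
  -- d2 = dtil on the grid
  have hd2til : ∀ i j, 1 ≤ i → i ≤ N → 1 ≤ j → j ≤ N → d2 i j = dtil i j := by
    intro i j h1 h2 h3 h4
    by_cases hj : j = r
    · subst hj; simp [hd2def, hdtildef, hddef]
    · simp [hd2def, hdtildef, hj, hkeep i j h1 h2 h3 h4 hj]
  -- kernel difference identity
  have hSdiff : Sker N w b b - Sker N w a a = Sker N w dtil b + Sker N w dtil a := by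
    rw [Sker_diff N w a b]
    congr 1
    · exact Sker_congr N w hd2til (fun _ _ _ _ _ _ => rfl)
    · rw [Sker_symm N w hwsym a d2]
      exact Sker_congr N w hd2til (fun _ _ _ _ _ _ => rfl)
  -- the key kernel inequality
  have hker : dx * dy / 2 * (Sker N w b b - Sker N w a a) ≤ dx * dy * Sker N w dtil ρhat := by
    have hdxy : (0:ℝ) < dx * dy := mul_pos hdx hdy
    rcases hcase with hmid | ⟨hold, hneg⟩ | ⟨hnew, hpos⟩
    · -- midpoint: equality
      have : Sker N w dtil ρhat = (Sker N w dtil b + Sker N w dtil a) / 2 := by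
        rw [← Sker_half N w dtil b a]
        refine Sker_congr N w (fun _ _ _ _ _ _ => rfl) ?_
        intro k l h1 h2 h3 h4
        by_cases hl : l = r
        · subst hl
          simp only [hρhatdef, if_pos rfl]
          exact hmid k l h1 h2 h3 h4
        · have := hkeep k l h1 h2 h3 h4 hl
          simp only [hρhatdef, if_neg hl]
          linarith
      rw [this, hSdiff]
      ring_nf
      linarith [le_refl (dx * dy / 2 * (Sker N w dtil b + Sker N w dtil a))]
    · -- old value: negative definite kernel
      have hqad : Sker N w dtil d2 ≤ 0 := by
        have key := hneg a b hposa hposb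
        have e1 : Sker N w dtil d2 = Sker N w d2 d2 :=
          (Sker_congr N w hd2til (fun _ _ _ _ _ _ => rfl)).symm
        have e2 : Sker N w d2 d2
            = ∑ i ∈ Finset.Icc 1 N, ∑ j ∈ Finset.Icc 1 N, ∑ k ∈ Finset.Icc 1 N,
                ∑ l ∈ Finset.Icc 1 N, w ((i : ℤ) - (k : ℤ)) ((j : ℤ) - (l : ℤ))
                  * (a i j - b i j) * (a k l - b k l) := by
          unfold Sker
          exact Finset.sum_congr rfl fun i _ => Finset.sum_congr rfl fun j _ =>
            Finset.sum_congr rfl fun k _ => Finset.sum_congr rfl fun l _ => by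
              simp only [hd2def]; ring
        rw [e1, e2]; exact key
      have hhat : Sker N w dtil ρhat = Sker N w dtil a := by
        refine Sker_congr N w (fun _ _ _ _ _ _ => rfl) ?_
        intro k l h1 h2 h3 h4
        by_cases hl : l = r
        · subst hl
          simp only [hρhatdef, if_pos rfl]
          exact hold k l h1 h2 h3 h4
        · simp only [hρhatdef, if_neg hl]
      have hsub : Sker N w dtil b - Sker N w dtil a = Sker N w dtil d2 := by
        rw [Sker_sub_right N w dtil b a]
      rw [hSdiff, hhat]
      nlinarith [hqad, hsub]
    · -- new value: positive definite kernel
      have hqad : 0 ≤ Sker N w dtil d2 := by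
        have key := hpos a b hposa hposb
        have e1 : Sker N w dtil d2 = Sker N w d2 d2 :=
          (Sker_congr N w hd2til (fun _ _ _ _ _ _ => rfl)).symm
        have e2 : Sker N w d2 d2
            = ∑ i ∈ Finset.Icc 1 N, ∑ j ∈ Finset.Icc 1 N, ∑ k ∈ Finset.Icc 1 N,
                ∑ l ∈ Finset.Icc 1 N, w ((i : ℤ) - (k : ℤ)) ((j : ℤ) - (l : ℤ))
                  * (a i j - b i j) * (a k l - b k l) := by
          unfold Sker
          exact Finset.sum_congr rfl fun i _ => Finset.sum_congr rfl fun j _ =>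
            Finset.sum_congr rfl fun k _ => Finset.sum_congr rfl fun l _ => by
              simp only [hd2def]; ring
        rw [e1, e2]; exact key
      have hhat : Sker N w dtil ρhat = Sker N w dtil b := by
        refine Sker_congr N w (fun _ _ _ _ _ _ => rfl) ?_
        intro k l h1 h2 h3 h4
        by_cases hl : l = r
        · subst hl
          simp only [hρhatdef, if_pos rfl]
          exact hnew k l h1 h2 h3 h4
        · simp only [hρhatdef, if_neg hl]
          exact (hkeep k l h1 h2 h3 h4 hl).symm
      have hsub : Sker N w dtil b - Sker N w dtil a = Sker N w dtil d2 := by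
        rw [Sker_sub_right N w dtil b a]
      rw [hSdiff, hhat]
      nlinarith [hqad, hsub]
  -- entropy part
  have hHsum : (∑ i ∈ I, ∑ j ∈ I, H (b i j)) - (∑ i ∈ I, ∑ j ∈ I, H (a i j))
      ≤ ∑ i ∈ I, deriv H (b i r) * d i := by
    rw [← Finset.sum_sub_distrib]
    have e : ∀ i ∈ I, (∑ j ∈ I, H (b i j)) - ∑ j ∈ I, H (a i j)
        = H (b i r) - H (a i r) := by
      intro i hi
      obtain ⟨hi1, hi2⟩ := Finset.mem_Icc.mp hi
      rw [← Finset.sum_sub_distrib]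
      rw [Finset.sum_eq_single r]
      · intro j hj hjr
        obtain ⟨hj1, hj2⟩ := Finset.mem_Icc.mp hj
        rw [hkeep i j hi1 hi2 hj1 hj2 hjr]
        ring
      · intro hcon; exact absurd hrI hcon
    rw [Finset.sum_congr rfl e]
    refine Finset.sum_le_sum fun i hi => ?_
    have := tangent_le hHconv hHdiff (a i r) (b i r)
    simpa [hddef] using this
  -- potential part
  have hVsum : (∑ i ∈ I, ∑ j ∈ I, V i j * b i j) - (∑ i ∈ I, ∑ j ∈ I, V i j * a i j)
      = ∑ i ∈ I, V i r * d i := by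
    rw [← Finset.sum_sub_distrib]
    refine Finset.sum_congr rfl fun i hi => ?_
    obtain ⟨hi1, hi2⟩ := Finset.mem_Icc.mp hi
    rw [← Finset.sum_sub_distrib]
    rw [Finset.sum_eq_single r]
    · simp [hddef]; ring
    · intro j hj hjr
      obtain ⟨hj1, hj2⟩ := Finset.mem_Icc.mp hj
      rw [hkeep i j hi1 hi2 hj1 hj2 hjr]
      ring
    · intro hcon; exact absurd hrI hcon
  -- collapse of the kernel term
  have hcol : Sker N w dtil ρhat
      = ∑ i ∈ I, d i * ∑ k ∈ I, ∑ l ∈ I,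
          w ((i : ℤ) - (k : ℤ)) ((r : ℤ) - (l : ℤ)) * ρhat k l := by
    simp only [hdtildef]
    exact Sker_row N w r hr1 hrN d ρhat
  -- combine into ξ
  have hcomb : (∑ i ∈ I, deriv H (b i r) * d i) + (∑ i ∈ I, V i r * d i)
      + dx * dy * Sker N w dtil ρhat = ∑ i ∈ I, ξ i r * d i := by
    rw [hcol, Finset.mul_sum, ← Finset.sum_add_distrib, ← Finset.sum_add_distrib]
    refine Finset.sum_congr rfl fun i hi => ?_
    obtain ⟨hi1, hi2⟩ := Finset.mem_Icc.mp hi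
    rw [hξ i hi1 hi2]
    simp only [hρhatdef]
    ring
  -- summation by parts
  have hN' : N - 1 + 1 = N := by omega
  have hsbp := sbp (fun i => ξ i r) F (N - 1)
  rw [hN'] at hsbp
  have hX2 : (∑ i ∈ I, ξ i r * d i)
      = -(dt / dx) * ∑ i ∈ I, ξ i r * (F i - F (i - 1)) := by
    rw [Finset.mul_sum]
    refine Finset.sum_congr rfl fun i hi => ?_
    obtain ⟨hi1, hi2⟩ := Finset.mem_Icc.mp hi
    have hb := hupd i hi1 hi2
    simp only [hddef]
    rw [hb]
    ring
  have hterm : ∀ i ∈ Finset.Icc 1 (N - 1),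
      ((fun i => ξ i r) i - (fun i => ξ i r) (i + 1)) * F i = dx * (u i * F i) := by
    intro i hi
    obtain ⟨h1, h2⟩ := Finset.mem_Icc.mp hi
    rw [hu i h1 h2]
    field_simp
    ring
  have hFu : ∀ i ∈ Finset.Icc 1 (N - 1), 0 ≤ u i * F i := by
    intro i hi
    obtain ⟨h1, h2⟩ := Finset.mem_Icc.mp hi
    have hrow : ∀ k, 1 ≤ k → k ≤ N → 0 ≤ (fun i' => b i' r) k := by
      intro k hk1 hk2; exact hposb k r hk1 hk2 hr1 hrN
    have hE := (rec_nonneg N dx hdx (fun i' => b i' r) hrow i h1 (by omega)).1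
    have hW := (rec_nonneg N dx hdx (fun i' => b i' r) hrow (i + 1) (by omega) (by omega)).2
    rw [hF i h1 h2]
    have h3 := pospart_mul_nonneg (u i)
    have h4 := negpart_mul_nonneg (u i)
    nlinarith
  have hXle : (∑ i ∈ I, ξ i r * d i) ≤ 0 := by
    rw [hX2, hsbp, Finset.sum_congr rfl hterm, hF0, hFN, ← Finset.mul_sum]
    have hs : 0 ≤ ∑ i ∈ Finset.Icc 1 (N - 1), u i * F i := Finset.sum_nonneg hFu
    have hpos : 0 ≤ dt / dx * (dx * ∑ i ∈ Finset.Icc 1 (N - 1), u i * F i) :=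
      mul_nonneg (le_of_lt (div_pos hdt hdx)) (mul_nonneg hdx.le hs)
    nlinarith
  -- final assembly
  have hD : Edisc2 N dx dy H V w b - Edisc2 N dx dy H V w a
      = dx * dy * (((∑ i ∈ I, ∑ j ∈ I, H (b i j)) - ∑ i ∈ I, ∑ j ∈ I, H (a i j))
        + ((∑ i ∈ I, ∑ j ∈ I, V i j * b i j) - ∑ i ∈ I, ∑ j ∈ I, V i j * a i j)
        + dx * dy / 2 * (Sker N w b b - Sker N w a a)) := by
    unfold Edisc2 Sker
    rw [← hIdef]
    ring
  have hdxy : (0:ℝ) < dx * dy := mul_pos hdx hdy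
  have hstep : ((∑ i ∈ I, ∑ j ∈ I, H (b i j)) - ∑ i ∈ I, ∑ j ∈ I, H (a i j))
      + ((∑ i ∈ I, ∑ j ∈ I, V i j * b i j) - ∑ i ∈ I, ∑ j ∈ I, V i j * a i j)
      + dx * dy / 2 * (Sker N w b b - Sker N w a a) ≤ 0 := by
    linarith [hHsum, hVsum, hker, hcomb, hXle]
  have hmul := mul_le_mul_of_nonneg_left hstep hdxy.le
  rw [mul_zero] at hmul
  linarith [hD, hmul]
/-- energy dissipation for the sweeping dimensional splitting scheme S1.
`ρx r` is the `r`-th stage of the x-sweep (only row `r` is updated at stage `r`), `ρy r`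
the `r`-th stage of the y-sweep, `ρⁿ = ρx 0`, `ρ^{n+1/2} = ρx N = ρy 0`, and
`ρⁿ⁺¹ = ρy N`.  The convolution variable at stage `r` equals `ρss r` (resp. `ρsss r`) on
the active row (resp. column) and the previous iterate elsewhere.  Assuming all iterates
at all stages are nonnegative, the discrete energy decreases at every individual stage
of both sweeps, and in particular `E_Δ(ρⁿ⁺¹) ≤ E_Δ(ρⁿ)`. -/
theorem stmt_15 (N : ℕ) (hN : 2 ≤ N) (dx dy dt : ℝ)
    (hdx : 0 < dx) (hdy : 0 < dy) (hdt : 0 < dt)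
    (H : ℝ → ℝ) (hHconv : ConvexOn ℝ Set.univ H) (hHdiff : Differentiable ℝ H)
    (V : ℕ → ℕ → ℝ) (w : ℤ → ℤ → ℝ)
    (hw1 : ∀ p q : ℤ, w (-p) q = w p q) (hw2 : ∀ p q : ℤ, w p (-q) = w p q)
    (ρx ρy ρss ρsss ξx ξy : ℕ → ℕ → ℕ → ℝ) (u v F G : ℕ → ℕ → ℝ)
    (hlink : ∀ i j, 1 ≤ i → i ≤ N → 1 ≤ j → j ≤ N → ρy 0 i j = ρx N i j)
    -- x-sweep: at stage r only row j = r is updated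
    (hkeepx : ∀ r, 1 ≤ r → r ≤ N → ∀ i j, 1 ≤ i → i ≤ N → 1 ≤ j → j ≤ N → j ≠ r →
      ρx r i j = ρx (r - 1) i j)
    (hξx : ∀ r, 1 ≤ r → r ≤ N → ∀ i j, 1 ≤ i → i ≤ N → 1 ≤ j → j ≤ N →
      ξx r i j = deriv H (ρx r i j) + V i j
        + dx * dy * ∑ k ∈ Finset.Icc 1 N, ∑ l ∈ Finset.Icc 1 N,
            w ((i : ℤ) - (k : ℤ)) ((j : ℤ) - (l : ℤ))
              * (if l = r then ρss r k l else ρx (r - 1) k l))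
    (hu : ∀ r, 1 ≤ r → r ≤ N → ∀ i, 1 ≤ i → i ≤ N - 1 →
      u r i = -(ξx r (i + 1) r - ξx r i r) / dx)
    (hFx : ∀ r, 1 ≤ r → r ≤ N → ∀ i, 1 ≤ i → i ≤ N - 1 →
      F r i = recE N dx (fun i' => ρx r i' r) i * pospart (u r i)
        + recW N dx (fun i' => ρx r i' r) (i + 1) * negpart (u r i))
    (hF0 : ∀ r, 1 ≤ r → r ≤ N → F r 0 = 0)
    (hFN : ∀ r, 1 ≤ r → r ≤ N → F r N = 0)
    (hupdx : ∀ r, 1 ≤ r → r ≤ N → ∀ i, 1 ≤ i → i ≤ N →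
      ρx r i r = ρx (r - 1) i r - dt / dx * (F r i - F r (i - 1)))
    -- y-sweep: at stage r only column i = r is updated
    (hkeepy : ∀ r, 1 ≤ r → r ≤ N → ∀ i j, 1 ≤ i → i ≤ N → 1 ≤ j → j ≤ N → i ≠ r →
      ρy r i j = ρy (r - 1) i j)
    (hξy : ∀ r, 1 ≤ r → r ≤ N → ∀ i j, 1 ≤ i → i ≤ N → 1 ≤ j → j ≤ N →
      ξy r i j = deriv H (ρy r i j) + V i j
        + dx * dy * ∑ k ∈ Finset.Icc 1 N, ∑ l ∈ Finset.Icc 1 N,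
            w ((i : ℤ) - (k : ℤ)) ((j : ℤ) - (l : ℤ))
              * (if k = r then ρsss r k l else ρy (r - 1) k l))
    (hv : ∀ r, 1 ≤ r → r ≤ N → ∀ j, 1 ≤ j → j ≤ N - 1 →
      v r j = -(ξy r r (j + 1) - ξy r r j) / dy)
    (hGy : ∀ r, 1 ≤ r → r ≤ N → ∀ j, 1 ≤ j → j ≤ N - 1 →
      G r j = recE N dy (fun j' => ρy r r j') j * pospart (v r j)
        + recW N dy (fun j' => ρy r r j') (j + 1) * negpart (v r j))
    (hG0 : ∀ r, 1 ≤ r → r ≤ N → G r 0 = 0)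
    (hGN : ∀ r, 1 ≤ r → r ≤ N → G r N = 0)
    (hupdy : ∀ r, 1 ≤ r → r ≤ N → ∀ j, 1 ≤ j → j ≤ N →
      ρy r r j = ρy (r - 1) r j - dt / dy * (G r j - G r (j - 1)))
    -- all iterates at all stages are nonnegative
    (hposx : ∀ r, r ≤ N → ∀ i j, 1 ≤ i → i ≤ N → 1 ≤ j → j ≤ N → 0 ≤ ρx r i j)
    (hposy : ∀ r, r ≤ N → ∀ i j, 1 ≤ i → i ≤ N → 1 ≤ j → j ≤ N → 0 ≤ ρy r i j)
    -- admissible choice of the convolution variables, possibly different at each stage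
    (hcase : ∀ r, 1 ≤ r → r ≤ N →
      ((∀ k l, 1 ≤ k → k ≤ N → 1 ≤ l → l ≤ N →
          ρss r k l = (ρx r k l + ρx (r - 1) k l) / 2) ∧
        (∀ k l, 1 ≤ k → k ≤ N → 1 ≤ l → l ≤ N →
          ρsss r k l = (ρy r k l + ρy (r - 1) k l) / 2)) ∨
      ((∀ k l, 1 ≤ k → k ≤ N → 1 ≤ l → l ≤ N → ρss r k l = ρx (r - 1) k l) ∧
        (∀ k l, 1 ≤ k → k ≤ N → 1 ≤ l → l ≤ N → ρsss r k l = ρy (r - 1) k l) ∧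
        NegDefKer2 N w) ∨
      ((∀ k l, 1 ≤ k → k ≤ N → 1 ≤ l → l ≤ N → ρss r k l = ρx r k l) ∧
        (∀ k l, 1 ≤ k → k ≤ N → 1 ≤ l → l ≤ N → ρsss r k l = ρy r k l) ∧
        PosDefKer2 N w)) :
    Edisc2 N dx dy H V w (ρy N) ≤ Edisc2 N dx dy H V w (ρx 0) ∧
    (∀ r, 1 ≤ r → r ≤ N →
      Edisc2 N dx dy H V w (ρx r) ≤ Edisc2 N dx dy H V w (ρx (r - 1)) ∧
      Edisc2 N dx dy H V w (ρy r) ≤ Edisc2 N dx dy H V w (ρy (r - 1))) := by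

  classical
  have hwsym : ∀ p q : ℤ, w (-p) (-q) = w p q := fun p q => by rw [hw1, hw2]
  have hwsym' : ∀ p q : ℤ, (fun p q => w q p) (-p) (-q) = (fun p q => w q p) p q := by
    intro p q
    simp only
    rw [hw2, hw1]
  -- x-sweep stages
  have hxstage : ∀ r, 1 ≤ r → r ≤ N →
      Edisc2 N dx dy H V w (ρx r) ≤ Edisc2 N dx dy H V w (ρx (r - 1)) := by
    intro r h1 h2
    refine stage N hN dx dy dt hdx hdy hdt H hHconv hHdiff V w hwsym r h1 h2
      (ρx (r - 1)) (ρx r) (ρss r) (ξx r) (u r) (F r)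
      (hkeepx r h1 h2)
      (fun i hi1 hi2 => hξx r h1 h2 i r hi1 hi2 h1 h2)
      (hu r h1 h2) (hFx r h1 h2) (hF0 r h1 h2) (hFN r h1 h2) (hupdx r h1 h2)
      (hposx (r - 1) (by omega)) (hposx r h2) ?_
    rcases hcase r h1 h2 with ⟨hx, _⟩ | ⟨hx, _, hker⟩ | ⟨hx, _, hker⟩
    · exact Or.inl hx
    · exact Or.inr (Or.inl ⟨hx, hker⟩)
    · exact Or.inr (Or.inr ⟨hx, hker⟩)
  -- y-sweep stages, via transposition
  have hystage : ∀ r, 1 ≤ r → r ≤ N →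
      Edisc2 N dx dy H V w (ρy r) ≤ Edisc2 N dx dy H V w (ρy (r - 1)) := by
    intro r h1 h2
    rw [← Edisc2_transpose N dx dy H V w (ρy r), ← Edisc2_transpose N dx dy H V w (ρy (r - 1))]
    refine stage N hN dy dx dt hdy hdx hdt H hHconv hHdiff (fun i j => V j i)
      (fun p q => w q p) hwsym' r h1 h2
      (fun i j => ρy (r - 1) j i) (fun i j => ρy r j i) (fun k l => ρsss r l k)
      (fun i j => ξy r j i) (v r) (G r)
      (fun i j hi1 hi2 hj1 hj2 hjr => hkeepy r h1 h2 j i hj1 hj2 hi1 hi2 hjr)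
      ?_ (hv r h1 h2) (hGy r h1 h2) (hG0 r h1 h2) (hGN r h1 h2) (hupdy r h1 h2)
      (fun i j hi1 hi2 hj1 hj2 => hposy (r - 1) (by omega) j i hj1 hj2 hi1 hi2)
      (fun i j hi1 hi2 hj1 hj2 => hposy r h2 j i hj1 hj2 hi1 hi2) ?_
    · -- the transposed ξ law
      intro i hi1 hi2
      have hs : (∑ k ∈ Finset.Icc 1 N, ∑ l ∈ Finset.Icc 1 N,
            (fun p q => w q p) ((i : ℤ) - (k : ℤ)) ((r : ℤ) - (l : ℤ))
              * (if l = r then (fun k l => ρsss r l k) k l else ρy (r - 1) l k))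
          = ∑ k ∈ Finset.Icc 1 N, ∑ l ∈ Finset.Icc 1 N,
            w ((r : ℤ) - (k : ℤ)) ((i : ℤ) - (l : ℤ))
              * (if k = r then ρsss r k l else ρy (r - 1) k l) := Finset.sum_comm
      calc (fun i j => ξy r j i) i r = ξy r r i := rfl
      _ = deriv H (ρy r r i) + V r i
            + dx * dy * ∑ k ∈ Finset.Icc 1 N, ∑ l ∈ Finset.Icc 1 N,
              w ((r : ℤ) - (k : ℤ)) ((i : ℤ) - (l : ℤ))
                * (if k = r then ρsss r k l else ρy (r - 1) k l) :=
          hξy r h1 h2 r i h1 h2 hi1 hi2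
      _ = deriv H ((fun i j => ρy r j i) i r) + (fun i j => V j i) i r
            + dy * dx * ∑ k ∈ Finset.Icc 1 N, ∑ l ∈ Finset.Icc 1 N,
              (fun p q => w q p) ((i : ℤ) - (k : ℤ)) ((r : ℤ) - (l : ℤ))
                * (if l = r then (fun k l => ρsss r l k) k l else (fun i j => ρy (r - 1) j i) k l) := by
          rw [hs]
          ring
    · -- transposed admissibility cases
      rcases hcase r h1 h2 with ⟨_, hy⟩ | ⟨_, hy, hker⟩ | ⟨_, hy, hker⟩
      · exact Or.inl fun k l hk1 hk2 hl1 hl2 => hy l k hl1 hl2 hk1 hk2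
      · exact Or.inr (Or.inl ⟨fun k l hk1 hk2 hl1 hl2 => hy l k hl1 hl2 hk1 hk2,
          NegDefKer2_transpose hker⟩)
      · exact Or.inr (Or.inr ⟨fun k l hk1 hk2 hl1 hl2 => hy l k hl1 hl2 hk1 hk2,
          PosDefKer2_transpose hker⟩)
  -- chaining
  have chain : ∀ (E : ℕ → ℝ), (∀ r, 1 ≤ r → r ≤ N → E r ≤ E (r - 1)) →
      ∀ r, r ≤ N → E r ≤ E 0 := by
    intro E hE r
    induction r with
    | zero => intro _; exact le_refl _
    | succ n ih =>
        intro h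
        have hstep := hE (n + 1) (by omega) h
        simp only [Nat.add_sub_cancel] at hstep
        exact hstep.trans (ih (by omega))
  have hx0 : Edisc2 N dx dy H V w (ρx N) ≤ Edisc2 N dx dy H V w (ρx 0) :=
    chain (fun r => Edisc2 N dx dy H V w (ρx r)) hxstage N le_rfl
  have hy0 : Edisc2 N dx dy H V w (ρy N) ≤ Edisc2 N dx dy H V w (ρy 0) :=
    chain (fun r => Edisc2 N dx dy H V w (ρy r)) hystage N le_rfl
  have hlinkE : Edisc2 N dx dy H V w (ρy 0) = Edisc2 N dx dy H V w (ρx N) :=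
    Edisc2_congr hlink
  exact ⟨hy0.trans (hlinkE.le.trans hx0), fun r h1 h2 => ⟨hxstage r h1 h2, hystage r h1 h2⟩⟩
end

section
/- (Unconditional positivity of the sweeping dimensional splitting scheme S2.) Let N ≥ 2, Δx, Δy, Δt > 0. Consider matrices ρ^{n,(0)}, …, ρ^{n,(N)} ∈ ℝ^{N×N} and ρ^{n+1/2,(0)}, …, ρ^{n+1/2,(N)} ∈ ℝ^{N×N} with ρ^{n+1/2,(0)} = ρ^{n,(N)}, such that: (x-sweep) for each r = 1,…,N, all rows j ≠ r of ρ^{n,(r)} equal those of ρ^{n,(r−1)}, and row r satisfies ρ^{n,(r)}_{i,r} = ρ^{n,(r−1)}_{i,r} − (Δt/Δx)(F^{(r)}_{i+1/2,r} − F^{(r)}_{i−1/2,r}), where F^{(r)}_{i+1/2,r} = ρ^{n,(r)}_{i,r}(u^{(r)}_{i+1/2,r})⁺ + ρ^{n,(r)}_{i+1,r}(u^{(r)}_{i+1/2,r})⁻ for 1 ≤ i ≤ N−1 with zero boundary fluxes and arbitrary real velocities u^{(r)}_{i+1/2,r}; (y-sweep) for each r = 1,…,N, all columns i ≠ r of ρ^{n+1/2,(r)}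 equal those of ρ^{n+1/2,(r−1)}, and column r satisfies ρ^{n+1/2,(r)}_{r,j} = ρ^{n+1/2,(r−1)}_{r,j} − (Δt/Δy)(G^{(r)}_{r,j+1/2} − G^{(r)}_{r,j−1/2}), where G^{(r)}_{r,j+1/2} = ρ^{n+1/2,(r)}_{r,j}(v^{(r)}_{r,j+1/2})⁺ + ρ^{n+1/2,(r)}_{r,j+1}(v^{(r)}_{r,j+1/2})⁻ with zero boundary fluxes and arbitrary real velocities. If ρ^{n,(0)}_{ij} ≥ 0 for all i,j, then ρ^{n+1} := ρ^{n+1/2,(N)} has all entries ≥ 0, with no restriction on Δt, Δx, Δy, or the velocities. -/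
lemma tele (g : ℕ → ℝ) : ∀ a b : ℕ, a ≤ b →
    ∑ i ∈ Finset.Icc a b, (g i - g (i-1)) = g b - g (a-1) := by
  intro a b h
  induction b, h using Nat.le_induction with
  | base => simp
  | succ b hb ih =>
      rw [Finset.sum_Icc_succ_top (by omega), ih]
      simp only [Nat.add_sub_cancel]
      ring

lemma oned (N : ℕ) (hN : 1 ≤ N) (c : ℝ) (hc : 0 < c)
    (ρ w u F : ℕ → ℝ)
    (hF : ∀ i, 1 ≤ i → i ≤ N - 1 → F i = ρ i * pospart (u i) + ρ (i+1) * negpart (u i))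
    (hF0 : F 0 = 0) (hFN : F N = 0)
    (hupd : ∀ i, 1 ≤ i → i ≤ N → ρ i = w i - c * (F i - F (i-1)))
    (hw : ∀ i, 1 ≤ i → i ≤ N → 0 ≤ w i) :
    ∀ i, 1 ≤ i → i ≤ N → 0 ≤ ρ i := by
  by_contra h
  push_neg at h
  obtain ⟨i0, hi1, hi2, hneg⟩ := h
  classical
  set b := Nat.findGreatest (fun j => ρ j < 0) N with hbdef
  have hb1 : i0 ≤ b := Nat.le_findGreatest hi2 hneg
  have hbN : b ≤ N := Nat.findGreatest_le N
  have hbneg : ρ b < 0 := Nat.findGreatest_spec (P := fun j => ρ j < 0) hi2 hneg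
  have habove : ∀ j, b < j → j ≤ N → 0 ≤ ρ j := by
    intro j h1 h2
    have := Nat.findGreatest_is_greatest (P := fun j => ρ j < 0) h1 h2
    simpa using le_of_not_gt this
  have hq : ∃ a, 1 ≤ a ∧ ∀ j, a ≤ j → j ≤ b → ρ j < 0 := by
    refine ⟨b, by omega, fun j h1 h2 => ?_⟩
    have : j = b := le_antisymm h2 h1
    rwa [this]
  set a := Nat.find hq with hadef
  obtain ⟨ha1, haneg⟩ := Nat.find_spec hq
  have hab : a ≤ b := Nat.find_min' hq ⟨by omega, fun j h1 h2 => by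
    have : j = b := le_antisymm h2 h1
    rwa [this]⟩
  have hleft : 1 ≤ a - 1 → 0 ≤ ρ (a-1) := by
    intro h2
    have hmin := Nat.find_min hq (m := a - 1) (by omega)
    push_neg at hmin
    obtain ⟨j, hj1, hj2, hj3⟩ := hmin h2
    have : j = a - 1 := by
      by_contra hne
      exact absurd (haneg j (by omega) hj2) (not_lt.2 hj3)
    rw [← this]; exact hj3
  set s := Finset.Icc a b with hsdef
  have hsum1 : ∑ i ∈ s, ρ i < 0 := by
    have : ∑ i ∈ s, ρ i < ∑ i ∈ s, (0:ℝ) := by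
      apply Finset.sum_lt_sum_of_nonempty
      · exact Finset.nonempty_Icc.2 hab
      · intro i hi
        rw [Finset.mem_Icc] at hi
        exact haneg i hi.1 hi.2
    simpa using this
  have hsum2 : ∑ i ∈ s, ρ i = (∑ i ∈ s, w i) - c * (F b - F (a-1)) := by
    have : ∑ i ∈ s, ρ i = ∑ i ∈ s, (w i - c * (F i - F (i-1))) := by
      apply Finset.sum_congr rfl
      intro i hi
      rw [Finset.mem_Icc] at hi
      exact hupd i (by omega) (by omega)
    rw [this, Finset.sum_sub_distrib, ← Finset.mul_sum, tele F a b hab]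
  have hwsum : 0 ≤ ∑ i ∈ s, w i := by
    apply Finset.sum_nonneg
    intro i hi
    rw [Finset.mem_Icc] at hi
    exact hw i (by omega) (by omega)
  have hFb : F b ≤ 0 := by
    rcases eq_or_lt_of_le hbN with h | h
    · rw [h, hFN]
    · have hf := hF b (by omega) (by omega)
      have h1 : ρ b * pospart (u b) ≤ 0 :=
        mul_nonpos_of_nonpos_of_nonneg hbneg.le (le_max_right _ _)
      have h2 : ρ (b+1) * negpart (u b) ≤ 0 :=
        mul_nonpos_of_nonneg_of_nonpos (habove (b+1) (by omega) (by omega)) (min_le_right _ _)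
      linarith [hf]
  have hFa : 0 ≤ F (a-1) := by
    rcases Nat.eq_or_lt_of_le ha1 with h | h
    · rw [show a - 1 = 0 by omega, hF0]
    · have hf := hF (a-1) (by omega) (by omega)
      have h1 : 0 ≤ ρ (a-1) * pospart (u (a-1)) :=
        mul_nonneg (hleft (by omega)) (le_max_right _ _)
      have h2 : 0 ≤ ρ ((a-1)+1) * negpart (u (a-1)) := by
        rw [show (a-1)+1 = a by omega]
        have := haneg a le_rfl hab
        have h3 : negpart (u (a-1)) ≤ 0 := min_le_right _ _
        nlinarith
      linarith [hf]
  have : c * (F b - F (a-1)) ≤ 0 :=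
    mul_nonpos_of_nonneg_of_nonpos hc.le (by linarith)
  linarith

/-- unconditional positivity of the sweeping dimensional splitting scheme
S2, for arbitrary interface velocities, with no restriction on `Δt`, `Δx`, `Δy`, or the
velocities.  `ρx r` is the `r`-th stage of the x-sweep (only row `r` is updated at stage
`r`), `ρy r` the `r`-th stage of the y-sweep, and `ρⁿ⁺¹ = ρy N`. -/
theorem stmt_16 (N : ℕ) (hN : 2 ≤ N) (dx dy dt : ℝ)
    (hdx : 0 < dx) (hdy : 0 < dy) (hdt : 0 < dt)
    (ρx ρy : ℕ → ℕ → ℕ → ℝ) (u v F G : ℕ → ℕ → ℝ)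
    (hlink : ∀ i j, 1 ≤ i → i ≤ N → 1 ≤ j → j ≤ N → ρy 0 i j = ρx N i j)
    -- x-sweep: at stage r only row j = r is updated, implicitly
    (hkeepx : ∀ r, 1 ≤ r → r ≤ N → ∀ i j, 1 ≤ i → i ≤ N → 1 ≤ j → j ≤ N → j ≠ r →
      ρx r i j = ρx (r - 1) i j)
    (hFx : ∀ r, 1 ≤ r → r ≤ N → ∀ i, 1 ≤ i → i ≤ N - 1 →
      F r i = ρx r i r * pospart (u r i) + ρx r (i + 1) r * negpart (u r i))
    (hF0 : ∀ r, 1 ≤ r → r ≤ N → F r 0 = 0)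
    (hFN : ∀ r, 1 ≤ r → r ≤ N → F r N = 0)
    (hupdx : ∀ r, 1 ≤ r → r ≤ N → ∀ i, 1 ≤ i → i ≤ N →
      ρx r i r = ρx (r - 1) i r - dt / dx * (F r i - F r (i - 1)))
    -- y-sweep: at stage r only column i = r is updated, implicitly
    (hkeepy : ∀ r, 1 ≤ r → r ≤ N → ∀ i j, 1 ≤ i → i ≤ N → 1 ≤ j → j ≤ N → i ≠ r →
      ρy r i j = ρy (r - 1) i j)
    (hGy : ∀ r, 1 ≤ r → r ≤ N → ∀ j, 1 ≤ j → j ≤ N - 1 →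
      G r j = ρy r r j * pospart (v r j) + ρy r r (j + 1) * negpart (v r j))
    (hG0 : ∀ r, 1 ≤ r → r ≤ N → G r 0 = 0)
    (hGN : ∀ r, 1 ≤ r → r ≤ N → G r N = 0)
    (hupdy : ∀ r, 1 ≤ r → r ≤ N → ∀ j, 1 ≤ j → j ≤ N →
      ρy r r j = ρy (r - 1) r j - dt / dy * (G r j - G r (j - 1)))
    (hpos : ∀ i j, 1 ≤ i → i ≤ N → 1 ≤ j → j ≤ N → 0 ≤ ρx 0 i j) :
    ∀ i j, 1 ≤ i → i ≤ N → 1 ≤ j → j ≤ N → 0 ≤ ρy N i j := by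
  have hN1 : 1 ≤ N := by omega
  have hx : ∀ r, r ≤ N → ∀ i j, 1 ≤ i → i ≤ N → 1 ≤ j → j ≤ N → 0 ≤ ρx r i j := by
    intro r
    induction r with
    | zero => intro _ i j h1 h2 h3 h4; exact hpos i j h1 h2 h3 h4
    | succ r ih =>
        intro hr i j h1 h2 h3 h4
        by_cases hj : j = r + 1
        · subst hj
          exact oned N hN1 (dt/dx) (div_pos hdt hdx)
            (fun i => ρx (r+1) i (r+1)) (fun i => ρx r i (r+1)) (u (r+1)) (F (r+1))
            (fun i hi1 hi2 => hFx (r+1) (by omega) hr i hi1 hi2)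
            (hF0 (r+1) (by omega) hr) (hFN (r+1) (by omega) hr)
            (fun i hi1 hi2 => hupdx (r+1) (by omega) hr i hi1 hi2)
            (fun i hi1 hi2 => ih (by omega) i (r+1) hi1 hi2 (by omega) hr)
            i h1 h2
        · rw [hkeepx (r+1) (by omega) hr i j h1 h2 h3 h4 hj]
          exact ih (by omega) i j h1 h2 h3 h4
  have hy : ∀ r, r ≤ N → ∀ i j, 1 ≤ i → i ≤ N → 1 ≤ j → j ≤ N → 0 ≤ ρy r i j := by
    intro r
    induction r with
    | zero =>
        intro _ i j h1 h2 h3 h4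
        rw [hlink i j h1 h2 h3 h4]
        exact hx N le_rfl i j h1 h2 h3 h4
    | succ r ih =>
        intro hr i j h1 h2 h3 h4
        by_cases hi : i = r + 1
        · subst hi
          exact oned N hN1 (dt/dy) (div_pos hdt hdy)
            (fun j => ρy (r+1) (r+1) j) (fun j => ρy r (r+1) j) (v (r+1)) (G (r+1))
            (fun j hj1 hj2 => hGy (r+1) (by omega) hr j hj1 hj2)
            (hG0 (r+1) (by omega) hr) (hGN (r+1) (by omega) hr)
            (fun j hj1 hj2 => hupdy (r+1) (by omega) hr j hj1 hj2)
            (fun j hj1 hj2 => ih (by omega) (r+1) j (by omega) hr hj1 hj2)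
            j h3 h4
        · rw [hkeepy (r+1) (by omega) hr i j h1 h2 h3 h4 hi]
          exact ih (by omega) i j h1 h2 h3 h4
  exact hy N le_rfl
end
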